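/- Let γ > 0 and suppose the function x ↦ γ‖Φx − b‖₂² + ‖Ψᵀx‖₁ is constant on a convex set Ω ⊆ ℝⁿ. Then Φx − b is constant on Ω (i.e., Φx₁ = Φx₂ for all x₁, x₂ ∈ Ω), and consequently ‖Ψᵀx‖₁ is also constant on Ω. -/

import Mathlib

open Matrix

/-- ℓ₁ norm of a finite real vector. -/
noncomputable def l1 {k : ℕ} (v : Fin k → ℝ) : ℝ := ∑ i, |v i|

/-- ℓ₂ (Euclidean) norm of a finite real vector. -/
noncomputable def l2 {k : ℕ} (v : Fin k → ℝ) : ℝ := Real.sqrt (∑ i, (v i) ^ 2)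

/-- ℓ₁ norm of the subvector indexed by `S`. -/
noncomputable def l1S {k : ℕ} (S : Finset (Fin k)) (v : Fin k → ℝ) : ℝ := ∑ i ∈ S, |v i|

/-- ℓ₂ norm of the subvector indexed by `S`. -/
noncomputable def l2S {k : ℕ} (S : Finset (Fin k)) (v : Fin k → ℝ) : ℝ :=
  Real.sqrt (∑ i ∈ S, (v i) ^ 2)

/-- ℓ∞ norm of the subvector indexed by `S` (0 if `S` is empty). -/
noncomputable def linfS {k : ℕ} (S : Finset (Fin k)) (v : Fin k → ℝ) : ℝ := ⨆ i ∈ S, |v i|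

lemma l2_sq {k : ℕ} (v : Fin k → ℝ) : (l2 v) ^ 2 = ∑ i, (v i) ^ 2 := by
  unfold l2
  exact Real.sq_sqrt (Finset.sum_nonneg fun i _ => sq_nonneg _)

/-- if γ‖Φx−b‖₂² + ‖Ψᵀx‖₁ is constant on a convex set, so are Φx−b and ‖Ψᵀx‖₁. -/
theorem stmt3 {m n l : ℕ} (Φ : Matrix (Fin m) (Fin n) ℝ) (Ψ : Matrix (Fin n) (Fin l) ℝ)
    (b : Fin m → ℝ) (γ : ℝ) (hγ : 0 < γ)
    (Ω : Set (Fin n → ℝ)) (hΩ : Convex ℝ Ω)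
    (c : ℝ)
    (hc : ∀ x ∈ Ω, γ * (l2 (Φ.mulVec x - b)) ^ 2 + l1 (Ψ.transpose.mulVec x) = c) :
    ∀ x₁ ∈ Ω, ∀ x₂ ∈ Ω, Φ.mulVec x₁ - b = Φ.mulVec x₂ - b ∧
      l1 (Ψ.transpose.mulVec x₁) = l1 (Ψ.transpose.mulVec x₂) := by
  intro x₁ h₁ x₂ h₂
  set u : Fin m → ℝ := Φ.mulVec x₁ - b with hu
  set v : Fin m → ℝ := Φ.mulVec x₂ - b with hv
  set xm : Fin n → ℝ := (1/2 : ℝ) • x₁ + (1/2 : ℝ) • x₂ with hxm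
  have hm : xm ∈ Ω := hΩ h₁ h₂ (by norm_num) (by norm_num) (by norm_num)
  have hmid : ∀ i, (Φ.mulVec xm - b) i = (u i + v i) / 2 := by
    intro i
    simp only [hxm, hu, hv, Matrix.mulVec_add, Matrix.mulVec_smul, Pi.sub_apply, Pi.add_apply,
      Pi.smul_apply, smul_eq_mul]
    ring
  have hmid1 : ∀ j, (Ψ.transpose.mulVec xm) j
      = ((Ψ.transpose.mulVec x₁) j + (Ψ.transpose.mulVec x₂) j) / 2 := by
    intro j
    simp only [hxm, Matrix.mulVec_add, Matrix.mulVec_smul, Pi.add_apply,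
      Pi.smul_apply, smul_eq_mul]
    ring
  have e1 := hc x₁ h₁
  have e2 := hc x₂ h₂
  have em := hc xm hm
  rw [l2_sq] at e1 e2 em
  rw [show Φ.mulVec x₁ - b = u from rfl] at e1
  rw [show Φ.mulVec x₂ - b = v from rfl] at e2
  -- l1 at midpoint is ≤ average
  have hl1 : l1 (Ψ.transpose.mulVec xm)
      ≤ (l1 (Ψ.transpose.mulVec x₁) + l1 (Ψ.transpose.mulVec x₂)) / 2 := by
    unfold l1
    rw [div_eq_inv_mul, ← Finset.sum_add_distrib, Finset.mul_sum]
    apply Finset.sum_le_sum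
    intro j _
    rw [hmid1 j]
    calc |((Ψ.transpose.mulVec x₁) j + (Ψ.transpose.mulVec x₂) j) / 2|
        = |(Ψ.transpose.mulVec x₁) j + (Ψ.transpose.mulVec x₂) j| / 2 := by
          rw [abs_div]; norm_num
      _ ≤ (|(Ψ.transpose.mulVec x₁) j| + |(Ψ.transpose.mulVec x₂) j|) / 2 := by
          gcongr; exact abs_add_le _ _
      _ = 2⁻¹ * (|(Ψ.transpose.mulVec x₁) j| + |(Ψ.transpose.mulVec x₂) j|) := by ring
  have hQm : ∑ i, ((Φ.mulVec xm - b) i) ^ 2 = ∑ i, ((u i + v i) / 2) ^ 2 := by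
    apply Finset.sum_congr rfl; intro i _; rw [hmid i]
  rw [hQm] at em
  -- key: sum of squared differences ≤ 0
  have hkey : ∑ i, ((u i - v i) / 2) ^ 2 ≤ 0 := by
    have hpar : ∑ i, ((u i - v i) / 2) ^ 2
        = (∑ i, (u i) ^ 2 + ∑ i, (v i) ^ 2) / 2 - ∑ i, ((u i + v i) / 2) ^ 2 := by
      have h : ∀ i, ((u i - v i) / 2) ^ 2
          = ((u i) ^ 2 + (v i) ^ 2) / 2 - ((u i + v i) / 2) ^ 2 := fun i => by ring
      simp_rw [h]
      rw [Finset.sum_sub_distrib, ← Finset.sum_div, Finset.sum_add_distrib]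
    rw [hpar]
    have hγm : γ * ∑ i, ((u i + v i) / 2) ^ 2
        ≥ γ * ((∑ i, (u i) ^ 2 + ∑ i, (v i) ^ 2) / 2) := by
      nlinarith [hl1]
    have := (mul_le_mul_iff_right₀ hγ).mp hγm
    linarith
  have hzero : ∀ i, ((u i - v i) / 2) ^ 2 = 0 := by
    intro i
    have hle := Finset.single_le_sum (f := fun i => ((u i - v i) / 2) ^ 2)
      (fun i _ => sq_nonneg _) (Finset.mem_univ i)
    have := sq_nonneg ((u i - v i) / 2)
    linarith
  have huv : u = v := by
    funext i
    have := hzero i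
    have h := pow_eq_zero_iff (n := 2) (by norm_num) |>.mp this
    have : u i - v i = 0 := by linarith [h]
    linarith
  refine ⟨huv, ?_⟩
  have hq : ∑ i, (u i) ^ 2 = ∑ i, (v i) ^ 2 := by rw [huv]
  rw [hq] at e1
  linarith
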